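/- If (Ш, →, ↠, ↪) is a (not necessarily finite) two-acyclic factorization system, then Pairs(→) is a well separated κ-lattice. Furthermore, writing L for Pairs(→), the system (Ш, →, ↠, ↪) is isomorphic to (JIrr^c(L), →_L, ↠_L, ↪_L). -/
import Mathlib


namespace SDL

variable {S : Type*} {L : Type*}

/-- `X^⊥ = {y | x ↛ y for all x ∈ X}` -/
def perpR (r : S → S → Prop) (X : Set S) : Set S := {y | ∀ x ∈ X, ¬ r x y}

/-- `^⊥Y = {x | x ↛ y for all y ∈ Y}` -/
def perpL (r : S → S → Prop) (Y : Set S) : Set S := {x | ∀ y ∈ Y, ¬ r x y}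

/-- `(X, Y)` is a maximal orthogonal pair for `r`. -/
def IsMOP (r : S → S → Prop) (X Y : Set S) : Prop := Y = perpR r X ∧ X = perpL r Y

/-- The set of maximal orthogonal pairs. -/
def Pairs (r : S → S → Prop) : Type _ := {p : Set S × Set S // IsMOP r p.1 p.2}

/-- `Pairs r` is ordered by containment in the first component. -/
instance (r : S → S → Prop) : PartialOrder (Pairs r) where
  le p q := p.val.1 ⊆ q.val.1
  le_refl _ := Set.Subset.rfl
  le_trans _ _ _ h h' := Set.Subset.trans h h'
  le_antisymm p q h h' := by
    apply Subtype.ext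
    have h1 : p.val.1 = q.val.1 := subset_antisymm h h'
    have h2 : p.val.2 = q.val.2 := by rw [p.prop.1, q.prop.1, h1]
    exact Prod.ext h1 h2

/-- `x ↠ y` iff for all `z`, `y → z` implies `x → z`. -/
def Onto (r : S → S → Prop) (x y : S) : Prop := ∀ z, r y z → r x z

/-- `x ↪ y` iff for all `z`, `z → x` implies `z → y`. -/
def Into (r : S → S → Prop) (x y : S) : Prop := ∀ z, r z x → r z y

/-- `Mult ↠ ↪` relates `x` to `z` iff `x ↠ y ↪ z` for some `y`. -/
def Mult (ont inj : S → S → Prop) (x z : S) : Prop := ∃ y, ont x y ∧ inj y z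

/-- `(S, r, ont, inj)` is a factorization system. -/
structure IsFactSystem (r ont inj : S → S → Prop) : Prop where
  refl : ∀ x, r x x
  onto_iff : ∀ x y, ont x y ↔ Onto r x y
  into_iff : ∀ x y, inj x y ↔ Into r x y
  mult_iff : ∀ x z, r x z ↔ Mult ont inj x z

/-- A two-acyclic factorization system. -/
structure IsTwoAcyclicFS (r ont inj : S → S → Prop) extends IsFactSystem r ont inj : Prop where
  onto_antisymm : ∀ x y, ont x y → ont y x → x = y
  into_antisymm : ∀ x y, inj x y → inj y x → x = y
  brick : ∀ x y, ont x y → inj y x → x = y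

/-- `T(x) = {x' | x ↠ x'}`. -/
def Tset (ont : S → S → Prop) (x : S) : Set S := {x' | ont x x'}

/-- `F(x) = {x' | x' ↪ x}`. -/
def Fset (inj : S → S → Prop) (x : S) : Set S := {x' | inj x' x}

/-- Restriction of a relation to a subset. -/
def restrictRel (r : S → S → Prop) (D : Set S) : D → D → Prop := fun a b => r a b

/-- A subset is closed if it equals its closure `^⊥(X^⊥)`. -/
def IsClosedSet (r : S → S → Prop) (X : Set S) : Prop := perpL r (perpR r X) = X

/-- The lattice of closed sets, ordered by containment. -/
abbrev Closeds (r : S → S → Prop) : Type _ := {X : Set S // IsClosedSet r X}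

/-- `Del(X, c) = X \ {x ∈ X : x ↠ c}`. -/
def Del (ont : S → S → Prop) (X : Set S) (c : S) : Set S := X \ {x | ont x c}

/-- `Cov(X)`: those `c ∈ X` with `Del(X,c)` closed and the closure of `Del(X,c) ∪ {c}` equal
to `X`. -/
def CovS (r ont : S → S → Prop) (X : Set S) : Set S :=
  {c | c ∈ X ∧ IsClosedSet r (Del ont X c) ∧ perpL r (perpR r (Del ont X c ∪ {c})) = X}

/-- Direct forcing: `x ⇝ y` iff `x` is `↠`-minimal in `F(y)` or `↪`-maximal in `T(y)`. -/
def Forces (ont inj : S → S → Prop) (x y : S) : Prop :=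
  (inj x y ∧ ∀ x', inj x' y → ont x x' → x' = x) ∨
  (ont y x ∧ ∀ x', ont y x' → inj x' x → x' = x)

/-- `down X` for a partial order given as a relation (`r x y` meaning `x ≥ y`). -/
def dnRel (r : S → S → Prop) (X : Set S) : Set S := {y | ∃ x ∈ X, r x y}

/-- `up X` for a partial order given as a relation (`r x y` meaning `x ≥ y`). -/
def upRel (r : S → S → Prop) (X : Set S) : Set S := {y | ∃ x ∈ X, r y x}

section OrderNotions

variable [PartialOrder L]

/-- Completely join-irreducible: there is `j⁎` such that `x < j ↔ x ≤ j⁎`. -/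
def CJIrr (j : L) : Prop := ∃ j', ∀ x : L, x < j ↔ x ≤ j'

/-- Completely meet-irreducible: there is `j^*` such that `x > m ↔ x ≥ m^*`. -/
def CMIrr (m : L) : Prop := ∃ m', ∀ x : L, m < x ↔ m' ≤ x

/-- `k = κ(j)`: `k` is the greatest element of `{y | j ⊓ y = j⁎}`. -/
def IsKappa (j k : L) : Prop :=
  ∃ j', (∀ x : L, x < j ↔ x ≤ j') ∧ IsGreatest {y : L | IsGLB ({j, y} : Set L) j'} k

/-- `k = κᵈ(m)`: `k` is the least element of `{x | m ⊔ x = m^*}`. -/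
def IsKappad (m k : L) : Prop :=
  ∃ m', (∀ x : L, m < x ↔ m' ≤ x) ∧ IsLeast {x : L | IsLUB ({m, x} : Set L) m'} k

/-- `L` is a κ-lattice: complete, meet and join generated by irreducibles, with inverse
bijections `κ` and `κᵈ` between the completely join- and meet-irreducibles. -/
def IsKappaLattice (L : Type*) [PartialOrder L] : Prop :=
  (∀ s : Set L, ∃ a, IsLUB s a) ∧
  (∀ s : Set L, ∃ a, IsGLB s a) ∧
  (∀ x : L, IsLUB {j : L | CJIrr j ∧ j ≤ x} x) ∧
  (∀ x : L, IsGLB {m : L | CMIrr m ∧ x ≤ m} x) ∧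
  (∀ j : L, CJIrr j → ∃ k, IsKappa j k ∧ CMIrr k ∧ IsKappad k j) ∧
  (∀ m : L, CMIrr m → ∃ k, IsKappad m k ∧ CJIrr k ∧ IsKappa k m)

/-- Well separated: `z₁ ≰ z₂` implies some completely join-irreducible `j` has `j ≤ z₁` and
`κ(j) ≥ z₂`. -/
def WellSeparated (L : Type*) [PartialOrder L] : Prop :=
  ∀ z₁ z₂ : L, ¬ z₁ ≤ z₂ → ∃ j k : L, CJIrr j ∧ IsKappa j k ∧ j ≤ z₁ ∧ z₂ ≤ k

/-- The set of completely join-irreducible elements, as a type. -/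
abbrev JIrrC (L : Type*) [PartialOrder L] : Type _ := {j : L // CJIrr j}

/-- `i →_L j` iff `i ≰ κ(j)`. -/
def toL (i j : JIrrC L) : Prop := ∃ k : L, IsKappa (j : L) k ∧ ¬ (i : L) ≤ k

/-- `i ↠_L j` iff `i ≥ j` in `L`. -/
def ontoL (i j : JIrrC L) : Prop := (j : L) ≤ (i : L)

/-- `i ↪_L j` iff `κ(i) ≥ κ(j)` in `L`. -/
def intoL (i j : JIrrC L) : Prop :=
  ∃ ki kj : L, IsKappa (i : L) ki ∧ IsKappa (j : L) kj ∧ kj ≤ ki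

/-- A poset is a semidistributive lattice (order-theoretically): binary joins and meets exist,
and both semidistributive laws hold. -/
def IsSDLattice (L : Type*) [PartialOrder L] : Prop :=
  (∀ x y : L, ∃ s, IsLUB ({x, y} : Set L) s) ∧
  (∀ x y : L, ∃ s, IsGLB ({x, y} : Set L) s) ∧
  (∀ x y z sxy sxz myz : L, IsLUB ({x, y} : Set L) sxy → IsLUB ({x, z} : Set L) sxz →
    sxy = sxz → IsGLB ({y, z} : Set L) myz → IsLUB ({x, myz} : Set L) sxy) ∧
  (∀ x y z mxy mxz syz : L, IsGLB ({x, y} : Set L) mxy → IsGLB ({x, z} : Set L) mxz →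
    mxy = mxz → IsLUB ({y, z} : Set L) syz → IsGLB ({x, syz} : Set L) mxy)

/-- `s` is the canonical join representation of `x`. -/
def IsCanonicalJoinRep (s : Set L) (x : L) : Prop :=
  IsLUB s x ∧ (∀ s' : Set L, IsLUB s' x → ∀ a ∈ s, ∃ b ∈ s', a ≤ b) ∧
  IsAntichain (· ≤ ·) s

end OrderNotions

/-- Join semidistributivity. -/
def JoinSD (L : Type*) [Lattice L] : Prop :=
  ∀ x y z : L, x ⊔ y = x ⊔ z → x ⊔ (y ⊓ z) = x ⊔ y

/-- Meet semidistributivity. -/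
def MeetSD (L : Type*) [Lattice L] : Prop :=
  ∀ x y z : L, x ⊓ y = x ⊓ z → x ⊓ (y ⊔ z) = x ⊓ y

/-- Complete join semidistributivity. -/
def CompletelyJoinSD (L : Type*) [CompleteLattice L] : Prop :=
  ∀ (X : Set L) (y z : L), X.Nonempty → (∀ x ∈ X, x ⊔ y = z) → sInf X ⊔ y = z

/-- Complete meet semidistributivity. -/
def CompletelyMeetSD (L : Type*) [CompleteLattice L] : Prop :=
  ∀ (X : Set L) (y z : L), X.Nonempty → (∀ x ∈ X, x ⊓ y = z) → sSup X ⊓ y = z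

end SDL

namespace SDL

section Auxiliary

universe v
variable {S : Type v}

theorem perpR_anti (r : S → S → Prop) {A B : Set S} (hAB : A ⊆ B) : perpR r B ⊆ perpR r A :=
  fun _ hy x hx => hy x (hAB hx)

theorem perpL_anti (r : S → S → Prop) {A B : Set S} (hAB : A ⊆ B) : perpL r B ⊆ perpL r A :=
  fun _ hy x hx => hy x (hAB hx)

theorem subset_perpL_perpR (r : S → S → Prop) (A : Set S) : A ⊆ perpL r (perpR r A) :=
  fun x hx y hy => hy x hx

theorem subset_perpR_perpL (r : S → S → Prop) (B : Set S) : B ⊆ perpR r (perpL r B) :=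
  fun y hy x hx => hx y hy

theorem perpR_perpL_perpR (r : S → S → Prop) (A : Set S) :
    perpR r (perpL r (perpR r A)) = perpR r A :=
  subset_antisymm (perpR_anti r (subset_perpL_perpR r A)) (subset_perpR_perpL r _)

theorem perpL_perpR_perpL (r : S → S → Prop) (B : Set S) :
    perpL r (perpR r (perpL r B)) = perpL r B :=
  subset_antisymm (perpL_anti r (subset_perpR_perpL r B)) (subset_perpL_perpR r _)

/-- The pair generated by a set on the left. -/
def mopL (r : S → S → Prop) (A : Set S) : Pairs r :=
  ⟨(perpL r (perpR r A), perpR r A), (perpR_perpL_perpR r A).symm, rfl⟩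

/-- The pair generated by a set on the right. -/
def mopR (r : S → S → Prop) (B : Set S) : Pairs r :=
  ⟨(perpL r B, perpR r (perpL r B)), rfl, (perpL_perpR_perpL r B).symm⟩

theorem pairs_le_iff {r : S → S → Prop} (P Q : Pairs r) : P ≤ Q ↔ P.1.1 ⊆ Q.1.1 := Iff.rfl

theorem pfst (r : S → S → Prop) (P : Pairs r) : P.1.1 = perpL r P.1.2 := P.2.2

theorem psnd (r : S → S → Prop) (P : Pairs r) : P.1.2 = perpR r P.1.1 := P.2.1

theorem pairs_le_iff_snd {r : S → S → Prop} (P Q : Pairs r) : P ≤ Q ↔ Q.1.2 ⊆ P.1.2 := by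
  constructor
  · intro hle
    rw [psnd r P, psnd r Q]
    exact perpR_anti r hle
  · intro hle
    rw [pairs_le_iff, pfst r P, pfst r Q]
    exact perpL_anti r hle

theorem pairs_ext {r : S → S → Prop} {P Q : Pairs r} (h1 : P.1.1 = Q.1.1) : P = Q := by
  apply Subtype.ext
  exact Prod.ext h1 (by rw [psnd r P, psnd r Q, h1])

theorem pairs_ext_snd {r : S → S → Prop} {P Q : Pairs r} (h1 : P.1.2 = Q.1.2) : P = Q := by
  apply pairs_ext
  rw [pfst r P, pfst r Q, h1]

/-- Supremum of a set of pairs. -/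
def pSup (r : S → S → Prop) (s : Set (Pairs r)) : Pairs r :=
  mopL r (⋃ P ∈ s, P.1.1)

/-- Infimum of a set of pairs. -/
def pInf (r : S → S → Prop) (s : Set (Pairs r)) : Pairs r :=
  mopR r (⋃ P ∈ s, P.1.2)

theorem isLUB_pSup (r : S → S → Prop) (s : Set (Pairs r)) : IsLUB s (pSup r s) := by
  constructor
  · intro P hP
    rw [pairs_le_iff]
    show P.1.1 ⊆ perpL r (perpR r (⋃ P ∈ s, P.1.1))
    exact (Set.subset_biUnion_of_mem (u := fun P => P.1.1) hP).trans (subset_perpL_perpR r _)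
  · intro Q hQ
    rw [pairs_le_iff]
    have hsub : (⋃ P ∈ s, P.1.1) ⊆ Q.1.1 := by
      apply Set.iUnion₂_subset
      intro P hP
      exact hQ hP
    calc perpL r (perpR r (⋃ P ∈ s, P.1.1)) ⊆ perpL r (perpR r Q.1.1) :=
          perpL_anti r (perpR_anti r hsub)
      _ = Q.1.1 := by rw [pfst r Q, perpL_perpR_perpL]

theorem isGLB_pInf (r : S → S → Prop) (s : Set (Pairs r)) : IsGLB s (pInf r s) := by
  constructor
  · intro P hP
    rw [pairs_le_iff_snd]
    show P.1.2 ⊆ perpR r (perpL r (⋃ P ∈ s, P.1.2))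
    exact (Set.subset_biUnion_of_mem (u := fun P => P.1.2) hP).trans (subset_perpR_perpL r _)
  · intro Q hQ
    rw [pairs_le_iff_snd]
    have hsub : (⋃ P ∈ s, P.1.2) ⊆ Q.1.2 := by
      apply Set.iUnion₂_subset
      intro P hP
      exact (pairs_le_iff_snd Q P).mp (hQ hP)
    calc perpR r (perpL r (⋃ P ∈ s, P.1.2)) ⊆ perpR r (perpL r Q.1.2) :=
          perpR_anti r (perpL_anti r hsub)
      _ = Q.1.2 := by rw [psnd r Q, perpR_perpL_perpR]

end Auxiliary

section FactAux

universe v2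
variable {S : Type v2} {r ont inj : S → S → Prop}

/-- The join-irreducible pair attached to an element. -/
def jp (r : S → S → Prop) (x : S) : Pairs r := mopL r {x}

/-- The meet-irreducible pair attached to an element. -/
def mp (r : S → S → Prop) (x : S) : Pairs r := mopR r {x}

theorem mem_jp_fst {x z : S} : z ∈ (jp r x).1.1 ↔ ∀ y, r z y → r x y := by
  constructor
  · intro hz y hzy
    by_contra hxy
    exact hz y (fun x' hx' => (Set.mem_singleton_iff.mp hx') ▸ hxy) hzy
  · intro hz y hy hzy
    exact hy x rfl (hz y hzy)

theorem mem_jp_snd {x y : S} : y ∈ (jp r x).1.2 ↔ ¬ r x y := by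
  constructor
  · intro hy
    exact hy x rfl
  · intro hy x' hx'
    exact (Set.mem_singleton_iff.mp hx') ▸ hy

theorem mem_mp_fst {x z : S} : z ∈ (mp r x).1.1 ↔ ¬ r z x := by
  constructor
  · intro hz
    exact hz x rfl
  · intro hz y hy
    exact (Set.mem_singleton_iff.mp hy) ▸ hz

theorem mem_mp_snd {x y : S} : y ∈ (mp r x).1.2 ↔ ∀ z, r z y → r z x := by
  constructor
  · intro hy z hzy
    by_contra hzx
    exact hy z (fun x' hx' => (Set.mem_singleton_iff.mp hx') ▸ hzx) hzy
  · intro hy z hz hzy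
    exact hz x rfl (hy z hzy)

theorem cl_fst (P : Pairs r) : perpL r (perpR r P.1.1) = P.1.1 := by
  rw [pfst r P, perpL_perpR_perpL]

theorem cl_snd (P : Pairs r) : perpR r (perpL r P.1.2) = P.1.2 := by
  rw [psnd r P, perpR_perpL_perpR]

theorem jp_le_iff (x : S) (P : Pairs r) : jp r x ≤ P ↔ x ∈ P.1.1 := by
  constructor
  · intro hle
    exact hle (mem_jp_fst.mpr (fun y hy => hy))
  · intro hx
    rw [pairs_le_iff]
    have : ({x} : Set S) ⊆ P.1.1 := Set.singleton_subset_iff.mpr hx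
    calc (jp r x).1.1 = perpL r (perpR r {x}) := rfl
      _ ⊆ perpL r (perpR r P.1.1) := perpL_anti r (perpR_anti r this)
      _ = P.1.1 := cl_fst P

theorem le_mp_iff (x : S) (P : Pairs r) : P ≤ mp r x ↔ x ∈ P.1.2 := by
  constructor
  · intro hle
    exact (pairs_le_iff_snd P (mp r x)).mp hle (mem_mp_snd.mpr (fun z hz => hz))
  · intro hx
    rw [pairs_le_iff_snd]
    have : ({x} : Set S) ⊆ P.1.2 := Set.singleton_subset_iff.mpr hx
    calc (mp r x).1.2 = perpR r (perpL r {x}) := rfl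
      _ ⊆ perpR r (perpL r P.1.2) := perpR_anti r (perpL_anti r this)
      _ = P.1.2 := cl_snd P

variable (h : IsTwoAcyclicFS r ont inj)
include h

theorem ont_refl' (x : S) : ont x x := (h.onto_iff x x).mpr (fun _ hz => hz)

theorem inj_refl' (x : S) : inj x x := (h.into_iff x x).mpr (fun _ hz => hz)

theorem ont_trans' {x y z : S} (h1 : ont x y) (h2 : ont y z) : ont x z :=
  (h.onto_iff x z).mpr (fun u hu => (h.onto_iff x y).mp h1 u ((h.onto_iff y z).mp h2 u hu))

theorem inj_trans' {x y z : S} (h1 : inj x y) (h2 : inj y z) : inj x z :=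
  (h.into_iff x z).mpr (fun u hu => (h.into_iff y z).mp h2 u ((h.into_iff x y).mp h1 u hu))

theorem r_of_ont {x y : S} (h1 : ont x y) : r x y :=
  (h.onto_iff x y).mp h1 y (h.refl y)

theorem r_of_inj {x y : S} (h1 : inj x y) : r x y :=
  (h.into_iff x y).mp h1 x (h.refl x)

theorem mem_jp_fst_ont {x z : S} : z ∈ (jp r x).1.1 ↔ ont x z := by
  rw [mem_jp_fst, h.onto_iff]
  exact Iff.rfl

theorem mem_mp_snd_inj {x y : S} : y ∈ (mp r x).1.2 ↔ inj y x := by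
  rw [mem_mp_snd, h.into_iff]
  exact Iff.rfl

theorem brick_ont {x x' : S} (h1 : ont x x') (h2 : x' ≠ x) : ¬ r x' x := by
  intro hr'
  obtain ⟨w, hw1, hw2⟩ := (h.mult_iff x' x).mp hr'
  have hxw : ont x w := ont_trans' h h1 hw1
  have : x = w := h.brick x w hxw hw2
  subst this
  exact h2 (h.onto_antisymm x' x hw1 h1)

theorem brick_inj {x y : S} (h1 : inj y x) (h2 : y ≠ x) : ¬ r x y := by
  intro hr'
  obtain ⟨v, hv1, hv2⟩ := (h.mult_iff x y).mp hr'
  have hvx : inj v x := inj_trans' h hv2 h1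
  have : x = v := h.brick x v hv1 hvx
  subst this
  exact h2 (h.into_antisymm y x h1 hv2)

/-- `j₊` for `jp x`. -/
def jstar (h : IsTwoAcyclicFS r ont inj) (x : S) : Pairs r := mopL r ((jp r x).1.1 \ {x})

/-- `m^*` for `mp x`. -/
def mstar (h : IsTwoAcyclicFS r ont inj) (x : S) : Pairs r := mopR r ((mp r x).1.2 \ {x})

theorem x_mem_perpR_D (x : S) : x ∈ perpR r ((jp r x).1.1 \ {x}) := by
  rintro z ⟨hz1, hz2⟩
  exact brick_ont h ((mem_jp_fst_ont h).mp hz1) hz2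

theorem x_mem_perpL_E (x : S) : x ∈ perpL r ((mp r x).1.2 \ {x}) := by
  rintro y ⟨hy1, hy2⟩
  exact brick_inj h ((mem_mp_snd_inj h).mp hy1) hy2

theorem x_not_mem_jstar (x : S) : x ∉ (jstar h x).1.1 := by
  intro hx
  exact hx x (x_mem_perpR_D h x) (h.refl x)

theorem x_not_mem_mstar (x : S) : x ∉ (mstar h x).1.2 := by
  intro hx
  exact hx x (x_mem_perpL_E h x) (h.refl x)

theorem jstar_le_jp (x : S) : jstar h x ≤ jp r x := by
  rw [pairs_le_iff]
  calc (jstar h x).1.1 = perpL r (perpR r ((jp r x).1.1 \ {x})) := rfl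
    _ ⊆ perpL r (perpR r (jp r x).1.1) := perpL_anti r (perpR_anti r Set.diff_subset)
    _ = (jp r x).1.1 := cl_fst _

theorem mp_le_mstar (x : S) : mp r x ≤ mstar h x := by
  rw [pairs_le_iff_snd]
  calc (mstar h x).1.2 = perpR r (perpL r ((mp r x).1.2 \ {x})) := rfl
    _ ⊆ perpR r (perpL r (mp r x).1.2) := perpR_anti r (perpL_anti r Set.diff_subset)
    _ = (mp r x).1.2 := cl_snd _

theorem lt_jp_iff (x : S) (P : Pairs r) : P < jp r x ↔ P ≤ jstar h x := by
  constructor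
  · intro hlt
    have hle : P ≤ jp r x := hlt.le
    have hx : x ∉ P.1.1 := by
      intro hx
      exact hlt.ne (le_antisymm hle ((jp_le_iff x P).mpr hx))
    rw [pairs_le_iff]
    have hsub : P.1.1 ⊆ (jp r x).1.1 \ {x} := fun z hz =>
      ⟨hle hz, fun hzx => hx ((Set.mem_singleton_iff.mp hzx) ▸ hz)⟩
    exact hsub.trans (subset_perpL_perpR r _)
  · intro hle
    have h1 : P ≤ jp r x := hle.trans (jstar_le_jp h x)
    refine lt_of_le_of_ne h1 ?_
    intro heq
    apply x_not_mem_jstar h x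
    apply hle
    rw [heq]
    exact mem_jp_fst.mpr (fun y hy => hy)

theorem mp_lt_iff (x : S) (P : Pairs r) : mp r x < P ↔ mstar h x ≤ P := by
  constructor
  · intro hlt
    have hle : mp r x ≤ P := hlt.le
    have hx : x ∉ P.1.2 := by
      intro hx
      exact hlt.ne (le_antisymm hle ((le_mp_iff x P).mpr hx))
    rw [pairs_le_iff_snd]
    have hsub : P.1.2 ⊆ (mp r x).1.2 \ {x} := fun y hy =>
      ⟨(pairs_le_iff_snd _ _).mp hle hy, fun hyx => hx ((Set.mem_singleton_iff.mp hyx) ▸ hy)⟩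
    exact hsub.trans (subset_perpR_perpL r _)
  · intro hle
    have h1 : mp r x ≤ P := (mp_le_mstar h x).trans hle
    refine lt_of_le_of_ne h1 ?_
    intro heq
    apply x_not_mem_mstar h x
    apply (pairs_le_iff_snd _ _).mp hle
    rw [← heq]
    exact mem_mp_snd.mpr (fun z hz => hz)

theorem cjirr_jp (x : S) : CJIrr (jp r x) := ⟨jstar h x, lt_jp_iff h x⟩

theorem cmirr_mp (x : S) : CMIrr (mp r x) := ⟨mstar h x, mp_lt_iff h x⟩

omit h in
theorem inter_subset_pInf_pair (P Q : Pairs r) : P.1.1 ∩ Q.1.1 ⊆ (pInf r {P, Q}).1.1 := by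
  rintro z ⟨hzP, hzQ⟩ y hy
  simp only [Set.mem_iUnion] at hy
  obtain ⟨R, hR, hyR⟩ := hy
  rcases hR with hR | hR
  · subst hR
    have := pfst r R ▸ hzP
    exact this y hyR
  · rw [Set.mem_singleton_iff.mp hR] at hyR
    have := pfst r Q ▸ hzQ
    exact this y hyR

omit h in
theorem inter_subset_pSup_pair (P Q : Pairs r) : P.1.2 ∩ Q.1.2 ⊆ (pSup r {P, Q}).1.2 := by
  rintro y ⟨hyP, hyQ⟩ z hz
  simp only [Set.mem_iUnion] at hz
  obtain ⟨R, hR, hzR⟩ := hz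
  rcases hR with hR | hR
  · subst hR
    intro hrzy
    exact (psnd r R ▸ hyP) z hzR hrzy
  · rw [Set.mem_singleton_iff.mp hR] at hzR
    intro hrzy
    exact (psnd r Q ▸ hyQ) z hzR hrzy

theorem isGLB_jp_mp (x : S) : IsGLB {jp r x, mp r x} (jstar h x) := by
  constructor
  · intro Q hQ
    rcases Set.mem_insert_iff.mp hQ with rfl | hQ
    · exact jstar_le_jp h x
    · rw [Set.mem_singleton_iff.mp hQ]
      rw [le_mp_iff]
      exact x_mem_perpR_D h x
  · intro R hR
    have h1 : R ≤ jp r x := hR (Set.mem_insert _ _)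
    have h2 : R ≤ mp r x := hR (Set.mem_insert_iff.mpr (Or.inr rfl))
    rw [pairs_le_iff]
    have hsub : R.1.1 ⊆ (jp r x).1.1 \ {x} := by
      intro z hz
      refine ⟨h1 hz, fun hzx => ?_⟩
      have hzx' := Set.mem_singleton_iff.mp hzx
      have : x ∈ (mp r x).1.1 := h2 (hzx' ▸ hz)
      exact mem_mp_fst.mp this (h.refl x)
    exact hsub.trans (subset_perpL_perpR r _)

theorem isLUB_mp_jp (x : S) : IsLUB {mp r x, jp r x} (mstar h x) := by
  constructor
  · intro Q hQ
    rcases Set.mem_insert_iff.mp hQ with rfl | hQ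
    · exact mp_le_mstar h x
    · rw [Set.mem_singleton_iff.mp hQ]
      rw [jp_le_iff]
      exact x_mem_perpL_E h x
  · intro R hR
    have h1 : mp r x ≤ R := hR (Set.mem_insert _ _)
    have h2 : jp r x ≤ R := hR (Set.mem_insert_iff.mpr (Or.inr rfl))
    rw [pairs_le_iff_snd]
    have hsub : R.1.2 ⊆ (mp r x).1.2 \ {x} := by
      intro y hy
      refine ⟨(pairs_le_iff_snd _ _).mp h1 hy, fun hyx => ?_⟩
      have hyx' := Set.mem_singleton_iff.mp hyx
      have hx1 : x ∈ R.1.1 := (jp_le_iff x R).mp h2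
      exact (psnd r R ▸ (hyx' ▸ hy)) x hx1 (h.refl x)
    exact hsub.trans (subset_perpR_perpL r _)

theorem glb_le_mp (x : S) (P : Pairs r) (hglb : IsGLB {jp r x, P} (jstar h x)) :
    P ≤ mp r x := by
  have hDP : (jstar h x).1.1 ⊆ P.1.1 :=
    (pairs_le_iff _ _).mp (hglb.1 (Set.mem_insert_iff.mpr (Or.inr rfl)))
  have hmeet : pInf r {jp r x, P} ≤ jstar h x := by
    apply hglb.2
    exact (isGLB_pInf r {jp r x, P}).1
  have hkey : (jp r x).1.1 ∩ P.1.1 ⊆ (jstar h x).1.1 :=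
    (inter_subset_pInf_pair (jp r x) P).trans hmeet
  have hxP : x ∉ P.1.1 := by
    intro hx
    exact x_not_mem_jstar h x (hkey ⟨mem_jp_fst.mpr (fun y hy => hy), hx⟩)
  rw [le_mp_iff, psnd r P]
  intro z hz hzx
  -- x ∉ P.1.1 means there is y ∈ P.1.2 with r x y
  have hxy : ∃ y ∈ P.1.2, r x y := by
    by_contra hcon
    push_neg at hcon
    exact hxP (pfst r P ▸ (fun y hy => hcon y hy))
  obtain ⟨y, hy, hrxy⟩ := hxy
  obtain ⟨v, hv1, hv2⟩ := (h.mult_iff x y).mp hrxy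
  have hvx : v = x := by
    by_contra hvne
    have hvD : v ∈ (jp r x).1.1 \ {x} :=
      ⟨(mem_jp_fst_ont h).mpr hv1, fun hv => hvne (Set.mem_singleton_iff.mp hv)⟩
    have hvP : v ∈ P.1.1 := hDP (subset_perpL_perpR r _ hvD)
    exact (pfst r P ▸ hvP) y hy (r_of_inj h hv2)
  have hv2' : inj x y := hvx ▸ hv2
  obtain ⟨w, hw1, hw2⟩ := (h.mult_iff z x).mp hzx
  have hwP : w ∈ P.1.1 := by
    rw [pfst r P]
    intro y' hy' hrwy'
    exact (pfst r P ▸ hz) y' hy' ((h.onto_iff z w).mp hw1 y' hrwy')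
  have hwy : inj w y := inj_trans' h hw2 hv2' 
  exact (pfst r P ▸ hwP) y hy (r_of_inj h hwy)

theorem jp_le_lub (x : S) (P : Pairs r) (hlub : IsLUB {mp r x, P} (mstar h x)) :
    jp r x ≤ P := by
  have hEP : (mstar h x).1.2 ⊆ P.1.2 :=
    (pairs_le_iff_snd _ _).mp (hlub.1 (Set.mem_insert_iff.mpr (Or.inr rfl)))
  have hjoin : mstar h x ≤ pSup r {mp r x, P} := by
    apply hlub.2
    exact (isLUB_pSup r {mp r x, P}).1
  have hkey : (mp r x).1.2 ∩ P.1.2 ⊆ (mstar h x).1.2 :=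
    (inter_subset_pSup_pair (mp r x) P).trans ((pairs_le_iff_snd _ _).mp hjoin)
  have hxP : x ∉ P.1.2 := by
    intro hx
    exact x_not_mem_mstar h x (hkey ⟨mem_mp_snd.mpr (fun z hz => hz), hx⟩)
  rw [jp_le_iff, pfst r P]
  intro y hy hrxy
  have hzx : ∃ z ∈ P.1.1, r z x := by
    by_contra hcon
    push_neg at hcon
    exact hxP (psnd r P ▸ (fun z hz => hcon z hz))
  obtain ⟨z, hz, hrzx⟩ := hzx
  obtain ⟨w, hw1, hw2⟩ := (h.mult_iff z x).mp hrzx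
  have hwx : w = x := by
    by_contra hwne
    have hwE : w ∈ (mp r x).1.2 \ {x} :=
      ⟨(mem_mp_snd_inj h).mpr hw2, fun hw => hwne (Set.mem_singleton_iff.mp hw)⟩
    have hwP : w ∈ P.1.2 := hEP (subset_perpR_perpL r _ hwE)
    exact (pfst r P ▸ hz) w hwP (r_of_ont h hw1)
  have hw1' : ont z x := hwx ▸ hw1
  obtain ⟨v, hv1, hv2⟩ := (h.mult_iff x y).mp hrxy
  have hvP : v ∈ P.1.2 := by
    rw [psnd r P]
    intro z' hz' hrz'v
    exact (psnd r P ▸ hy) z' hz' ((h.into_iff v y).mp hv2 z' hrz'v)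
  have hzv : ont z v := ont_trans' h hw1' hv1
  exact (pfst r P ▸ hz) v hvP (r_of_ont h hzv)

theorem isKappa_jp_mp (x : S) : IsKappa (jp r x) (mp r x) := by
  refine ⟨jstar h x, lt_jp_iff h x, ?_, ?_⟩
  · exact isGLB_jp_mp h x
  · intro P hP
    exact glb_le_mp h x P hP

theorem isKappad_mp_jp (x : S) : IsKappad (mp r x) (jp r x) := by
  refine ⟨mstar h x, mp_lt_iff h x, ?_, ?_⟩
  · exact isLUB_mp_jp h x
  · intro P hP
    exact jp_le_lub h x P hP

omit h in
theorem cjirr_eq_jp {j : Pairs r} (hj : CJIrr j) : ∃ x, jp r x = j := by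
  obtain ⟨j', hj'⟩ := hj
  have hlt : j' < j := (hj' j').mpr le_rfl
  have hne : ¬ j.1.1 ⊆ j'.1.1 := by
    intro hsub
    exact hlt.ne (pairs_ext (subset_antisymm hlt.le hsub))
  obtain ⟨x, hx1, hx2⟩ := Set.not_subset.mp hne
  refine ⟨x, ?_⟩
  have h1 : jp r x ≤ j := (jp_le_iff x j).mpr hx1
  rcases eq_or_lt_of_le h1 with heq | hlt2
  · exact heq
  · exact absurd ((jp_le_iff x j').mp ((hj' _).mp hlt2)) hx2

omit h in
theorem cmirr_eq_mp {m : Pairs r} (hm : CMIrr m) : ∃ x, mp r x = m := by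
  obtain ⟨m', hm'⟩ := hm
  have hlt : m < m' := (hm' m').mpr le_rfl
  have hne : ¬ m.1.2 ⊆ m'.1.2 := by
    intro hsub
    exact hlt.ne (pairs_ext_snd (subset_antisymm hsub ((pairs_le_iff_snd _ _).mp hlt.le)))
  obtain ⟨x, hx1, hx2⟩ := Set.not_subset.mp hne
  refine ⟨x, ?_⟩
  have h1 : m ≤ mp r x := (le_mp_iff x m).mpr hx1
  rcases eq_or_lt_of_le h1 with heq | hlt2
  · exact heq.symm
  · exact absurd ((le_mp_iff x m').mp ((hm' _).mp hlt2)) hx2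

omit h in
theorem isKappa_unique {L0 : Type*} [PartialOrder L0] {j k1 k2 : L0}
    (h1 : IsKappa j k1) (h2 : IsKappa j k2) : k1 = k2 := by
  obtain ⟨j1, hj1, hg1⟩ := h1
  obtain ⟨j2, hj2, hg2⟩ := h2
  have hjeq : j1 = j2 :=
    le_antisymm ((hj2 j1).mp ((hj1 j1).mpr le_rfl)) ((hj1 j2).mp ((hj2 j2).mpr le_rfl))
  subst hjeq
  exact hg1.unique hg2

end FactAux

/-- Theorem 1.4: if `(Ш, →, ↠, ↪)` is a two-acyclic factorization system, then `Pairs(→)` is a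
well separated κ-lattice, and the system is isomorphic to
`(JIrr^c(Pairs(→)), →_L, ↠_L, ↪_L)`. -/
theorem pairs_is_wellsep_kappa (S : Type u) (r ont inj : S → S → Prop)
    (h : IsTwoAcyclicFS r ont inj) :
    IsKappaLattice (Pairs r) ∧ WellSeparated (Pairs r) ∧
    ∃ e : S ≃ JIrrC (Pairs r), ∀ x y : S,
      (r x y ↔ toL (e x) (e y)) ∧
      (ont x y ↔ ontoL (e x) (e y)) ∧
      (inj x y ↔ intoL (e x) (e y)) := by
  classical
  refine ⟨⟨fun s => ⟨pSup r s, isLUB_pSup r s⟩, fun s => ⟨pInf r s, isGLB_pInf r s⟩,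
    ?_, ?_, ?_, ?_⟩, ?_, ?_⟩
  · -- join generation
    intro P
    constructor
    · intro j hj
      exact hj.2
    · intro Q hQ
      rw [pairs_le_iff]
      intro x hx
      exact (jp_le_iff x Q).mp (hQ ⟨cjirr_jp h x, (jp_le_iff x P).mpr hx⟩)
  · -- meet generation
    intro P
    constructor
    · intro m hm
      exact hm.2
    · intro Q hQ
      rw [pairs_le_iff_snd]
      intro x hx
      exact (le_mp_iff x Q).mp (hQ ⟨cmirr_mp h x, (le_mp_iff x P).mpr hx⟩)
  · -- kappa
    intro j hj
    obtain ⟨x, rfl⟩ := cjirr_eq_jp hj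
    exact ⟨mp r x, isKappa_jp_mp h x, cmirr_mp h x, isKappad_mp_jp h x⟩
  · -- kappad
    intro m hm
    obtain ⟨x, rfl⟩ := cmirr_eq_mp hm
    exact ⟨jp r x, isKappad_mp_jp h x, cjirr_jp h x, isKappa_jp_mp h x⟩
  · -- well separated
    intro z₁ z₂ hle
    have hne : ¬ z₁.1.1 ⊆ z₂.1.1 := fun hsub => hle ((pairs_le_iff _ _).mpr hsub)
    obtain ⟨x, hx1, hx2⟩ := Set.not_subset.mp hne
    have hex : ∃ y ∈ z₂.1.2, r x y := by
      by_contra hcon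
      push_neg at hcon
      exact hx2 (pfst r z₂ ▸ (fun y hy => hcon y hy))
    obtain ⟨y, hy, hrxy⟩ := hex
    obtain ⟨v, hv1, hv2⟩ := (h.mult_iff x y).mp hrxy
    have hvz1 : v ∈ z₁.1.1 := by
      rw [pfst r z₁]
      intro y' hy' hrvy'
      exact (pfst r z₁ ▸ hx1) y' hy' ((h.onto_iff x v).mp hv1 y' hrvy')
    have hvz2 : v ∈ z₂.1.2 := by
      rw [psnd r z₂]
      intro z hz hrzv
      exact (psnd r z₂ ▸ hy) z hz ((h.into_iff v y).mp hv2 z hrzv)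
    exact ⟨jp r v, mp r v, cjirr_jp h v, isKappa_jp_mp h v, (jp_le_iff v z₁).mpr hvz1,
      (le_mp_iff v z₂).mpr hvz2⟩
  · -- the isomorphism
    have hinj : Function.Injective (fun x : S => (⟨jp r x, cjirr_jp h x⟩ : JIrrC (Pairs r))) := by
      intro x y hxy
      have heq : jp r x = jp r y := congrArg Subtype.val hxy
      have hx : x ∈ (jp r x).1.1 := mem_jp_fst.mpr (fun z hz => hz)
      have hy : y ∈ (jp r y).1.1 := mem_jp_fst.mpr (fun z hz => hz)
      have h1 : ont y x := (mem_jp_fst_ont h).mp (heq ▸ hx)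
      have h2 : ont x y := (mem_jp_fst_ont h).mp (heq.symm ▸ hy)
      exact h.onto_antisymm x y h2 h1
    have hsurj : Function.Surjective
        (fun x : S => (⟨jp r x, cjirr_jp h x⟩ : JIrrC (Pairs r))) := by
      intro j
      obtain ⟨x, hx⟩ := cjirr_eq_jp j.2
      exact ⟨x, Subtype.ext hx⟩
    refine ⟨Equiv.ofBijective _ ⟨hinj, hsurj⟩, ?_⟩
    intro x y
    refine ⟨?_, ?_, ?_⟩
    · constructor
      · intro hrxy
        refine ⟨mp r y, isKappa_jp_mp h y, fun hle => ?_⟩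
        have hmem : x ∈ (mp r y).1.1 := (jp_le_iff x (mp r y)).mp hle
        exact mem_mp_fst.mp hmem hrxy
      · rintro ⟨k, hk, hnle⟩
        have hkeq : k = mp r y := isKappa_unique hk (isKappa_jp_mp h y)
        subst hkeq
        by_contra hrxy
        exact hnle ((jp_le_iff x (mp r y)).mpr (mem_mp_fst.mpr hrxy))
    · constructor
      · intro ho
        exact (jp_le_iff y (jp r x)).mpr ((mem_jp_fst_ont h).mpr ho)
      · intro ho
        exact (mem_jp_fst_ont h).mp ((jp_le_iff y (jp r x)).mp ho)
    · constructor
      · intro hi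
        refine ⟨mp r x, mp r y, isKappa_jp_mp h x, isKappa_jp_mp h y, ?_⟩
        rw [pairs_le_iff]
        intro z hz
        have hz' : ¬ r z y := mem_mp_fst.mp hz
        exact mem_mp_fst.mpr (fun hzx => hz' ((h.into_iff x y).mp hi z hzx))
      · rintro ⟨ki, kj, hki, hkj, hle⟩
        have e1 : ki = mp r x := isKappa_unique hki (isKappa_jp_mp h x)
        have e2 : kj = mp r y := isKappa_unique hkj (isKappa_jp_mp h y)
        subst e1
        subst e2
        apply (h.into_iff x y).mpr
        intro z hzx
        by_contra hzy
        exact mem_mp_fst.mp (hle (mem_mp_fst.mpr hzy)) hzx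

end SDL
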